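/- Let S be a race-free occurrence net with polarized events and let S′ = S ⋈_f be obtained from S by a drop-preserving join determined by a maximal negative conflict cluster N, a strictly positive cluster P (possibly contained in a larger maximal cluster ℙ of events of polarity 0 or ⊕) and a bijection f : N → P. Then S′ is race-free. -/

import Mathlib

open scoped Classical ComplexOrder

set_option linter.unusedSectionVars false
set_option maxHeartbeats 1000000

noncomputable section

namespace QPN




/-- Polarities of events: `neg` (environment/Opponent), `zero` (internal), `pos` (program/Player). -/
inductive Pol where
  | neg | zero | pos
deriving DecidableEq

/-- A Petri-net skeleton with polarized transitions, given by pre- and post-places of every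
transition, an initial marking, and a polarity for each transition. -/
structure Net (P E : Type) where
  pre : E → Finset P
  post : E → Finset P
  init : Finset P
  pol : E → Pol

variable {P E : Type} [DecidableEq P] [DecidableEq E]

namespace Net

variable (N : Net P E)

/-- Immediate causal flow between events: a post-condition of `e` is a pre-condition of `e'`. -/
def flows (e e' : E) : Prop := (N.post e ∩ N.pre e').Nonempty

/-- Causality: the reflexive-transitive closure of the flow relation, on events. -/
def causes (e e' : E) : Prop := Relation.ReflTransGen N.flows e e'

/-- Conflict between events: `x # x'` iff there are distinct events `e ≠ e'` with a common
pre-condition, `e ≤ x` and `e' ≤ x'`. -/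
def conflict (x y : E) : Prop :=
  ∃ e e', e ≠ e' ∧ (N.pre e ∩ N.pre e').Nonempty ∧ N.causes e x ∧ N.causes e' y

/-- Minimal conflict `a ~ b`. -/
def minConflict (a b : E) : Prop :=
  N.conflict a b ∧ (∀ a', N.causes a' a → a' ≠ a → ¬ N.conflict a' b) ∧
    (∀ b', N.causes b' b → b' ≠ b → ¬ N.conflict a b')

/-- Race-freeness: in a minimal conflict, either both events are negative or neither is. -/
def RaceFree : Prop :=
  ∀ a b, N.minConflict a b → (N.pol a = Pol.neg ↔ N.pol b = Pol.neg)

/-- The axioms making a (safe) polarized net an occurrence net. -/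
structure IsOccurrenceNet : Prop where
  causality_antisymm : ∀ e e', N.causes e e' → N.causes e' e → e = e'
  finite_cones : ∀ e, {e' | N.causes e' e}.Finite
  no_self_conflict : ∀ e, ¬ N.conflict e e
  unique_pre : ∀ c e e', c ∈ N.post e → c ∈ N.post e' → e = e'
  init_minimal : ∀ c, c ∈ N.init ↔ ∀ e, c ∉ N.post e

/-- Configurations: finite, down-closed and conflict-free sets of events. -/
def IsConfig (x : Finset E) : Prop :=
  (∀ e ∈ x, ∀ e', N.causes e' e → e' ∈ x) ∧ ∀ e ∈ x, ∀ e' ∈ x, ¬ N.conflict e e'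

/-- A configuration `x` enables an event `e`, written `x ⊢ e`. -/
def Enables (x : Finset E) (e : E) : Prop := e ∉ x ∧ N.IsConfig (insert e x)

/-- The marking (cut) `x̂` associated to a configuration `x`: the conditions holding after
firing exactly the events of `x`. -/
def markingOf (x : Finset E) : Finset P :=
  (N.init ∪ x.biUnion N.post) \ x.biUnion N.pre

/-- Result of firing transition `e` from marking `m`. -/
def fire (m : Finset P) (e : E) : Finset P := (m \ N.pre e) ∪ N.post e

/-- Firing sequences of transitions between markings. -/
inductive FireSeq : Finset P → List E → Finset P → Prop
  | nil (m : Finset P) : FireSeq m [] m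
  | cons {m m' : Finset P} {e : E} {L : List E} :
      N.pre e ⊆ m → FireSeq (N.fire m e) L m' → FireSeq m (e :: L) m'

/-- Reachability `m →* m'`. -/
def Reach (m m' : Finset P) : Prop := ∃ L, N.FireSeq m L m'

/-- The marking obtained after firing the list `L` from `m`. -/
def markAfter : Finset P → List E → Finset P
  | m, [] => m
  | m, e :: L => markAfter (N.fire m e) L

/-- `{e}^⊖` : the singleton `{e}` if `e` is negative, `∅` otherwise. -/
def negPart (e : E) : Finset E := if N.pol e = Pol.neg then {e} else ∅
/-- `{e}^⊕` : the singleton `{e}` if `e` is positive, `∅` otherwise. -/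
def posPart (e : E) : Finset E := if N.pol e = Pol.pos then {e} else ∅
/-- The negative events of a finite set of events. -/
def negs (t : Finset E) : Finset E := t.filter fun e => N.pol e = Pol.neg
/-- The positive events of a finite set of events. -/
def poss (t : Finset E) : Finset E := t.filter fun e => N.pol e = Pol.pos

/-- The set `σ[m;m']` of events fired from `m` to `m'` (chosen via some firing sequence;
in an occurrence net it does not depend on the choice). -/
def sigma (m m' : Finset P) : Finset E :=
  if h : ∃ L, N.FireSeq m L m' then h.choose.toFinset else ∅

theorem markAfter_eq {m m' : Finset P} {L : List E} (h : N.FireSeq m L m') :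
    N.markAfter m L = m' := by
  induction h with
  | nil => rfl
  | cons _ _ ih => exact ih

end Net






/-- Linear maps between matrix algebras (super-operators). -/
abbrev MatMap (α β : Type) := Matrix α α ℂ →ₗ[ℂ] Matrix β β ℂ

/-- The trace, as a linear functional. -/
def trFun (α : Type) [Fintype α] : Matrix α α ℂ →ₗ[ℂ] ℂ := Matrix.traceLinearMap α ℂ ℂ

/-- Transport of a super-operator along an equality of index types. -/
def castMap {α β : Type} (h : α = β) : MatMap α β := by subst h; exact LinearMap.id

/-- Conjugation of a super-operator by bijections of the index types. -/
def conjMap {α α' β β' : Type} (eIn : α ≃ α') (eOut : β ≃ β') (Φ : MatMap α β) : MatMap α' β' :=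
  (Matrix.reindexLinearEquiv ℂ ℂ eOut eOut).toLinearMap ∘ₗ Φ ∘ₗ
    (Matrix.reindexLinearEquiv ℂ ℂ eIn.symm eIn.symm).toLinearMap

/-- `Φ ⊗ Id` : tensoring a super-operator with the identity on a further factor (on the right). -/
def tensorIdRight {α β γ : Type} (Φ : MatMap α β) : MatMap (α × γ) (β × γ) where
  toFun ρ := Matrix.of fun pq p'q' =>
    Φ (Matrix.of fun a a' => ρ (a, pq.2) (a', p'q'.2)) pq.1 p'q'.1
  map_add' ρ σ := by
    ext pq p'q'
    show Φ (Matrix.of fun a a' => (ρ + σ) (a, pq.2) (a', p'q'.2)) pq.1 p'q'.1 =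
      Φ (Matrix.of fun a a' => ρ (a, pq.2) (a', p'q'.2)) pq.1 p'q'.1 +
        Φ (Matrix.of fun a a' => σ (a, pq.2) (a', p'q'.2)) pq.1 p'q'.1
    rw [show (Matrix.of fun a a' => (ρ + σ) (a, pq.2) (a', p'q'.2)) =
        (Matrix.of fun a a' => ρ (a, pq.2) (a', p'q'.2)) +
          (Matrix.of fun a a' => σ (a, pq.2) (a', p'q'.2)) from rfl, map_add]
    rfl
  map_smul' c ρ := by
    ext pq p'q'
    show Φ (Matrix.of fun a a' => (c • ρ) (a, pq.2) (a', p'q'.2)) pq.1 p'q'.1 = _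
    rw [show (Matrix.of fun a a' => (c • ρ) (a, pq.2) (a', p'q'.2)) =
        c • (Matrix.of fun a a' => ρ (a, pq.2) (a', p'q'.2)) from rfl, map_smul]
    rfl

/-- `Id ⊗ Φ` : tensoring a super-operator with the identity on a further factor (on the left). -/
def tensorIdLeft {α β γ : Type} (Φ : MatMap α β) : MatMap (γ × α) (γ × β) where
  toFun ρ := Matrix.of fun pq p'q' =>
    Φ (Matrix.of fun a a' => ρ (pq.1, a) (p'q'.1, a')) pq.2 p'q'.2
  map_add' ρ σ := by
    ext pq p'q'
    show Φ (Matrix.of fun a a' => (ρ + σ) (pq.1, a) (p'q'.1, a')) pq.2 p'q'.2 =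
      Φ (Matrix.of fun a a' => ρ (pq.1, a) (p'q'.1, a')) pq.2 p'q'.2 +
        Φ (Matrix.of fun a a' => σ (pq.1, a) (p'q'.1, a')) pq.2 p'q'.2
    rw [show (Matrix.of fun a a' => (ρ + σ) (pq.1, a) (p'q'.1, a')) =
        (Matrix.of fun a a' => ρ (pq.1, a) (p'q'.1, a')) +
          (Matrix.of fun a a' => σ (pq.1, a) (p'q'.1, a')) from rfl, map_add]
    rfl
  map_smul' c ρ := by
    ext pq p'q'
    show Φ (Matrix.of fun a a' => (c • ρ) (pq.1, a) (p'q'.1, a')) pq.2 p'q'.2 = _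
    rw [show (Matrix.of fun a a' => (c • ρ) (pq.1, a) (p'q'.1, a')) =
        c • (Matrix.of fun a a' => ρ (pq.1, a) (p'q'.1, a')) from rfl, map_smul]
    rfl

/-- `d ⊗ tr` : a linear functional `d` on the first tensor factor, tensored with the trace on
the second factor (i.e. `d` applied after partially tracing out the second factor). -/
def trSnd {α β : Type} [Fintype β] (d : Matrix α α ℂ →ₗ[ℂ] ℂ) :
    Matrix (α × β) (α × β) ℂ →ₗ[ℂ] ℂ where
  toFun ρ := d (Matrix.of fun a a' => ∑ b : β, ρ (a, b) (a', b))
  map_add' ρ σ := by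
    have h : (Matrix.of fun a a' => ∑ b : β, (ρ + σ) (a, b) (a', b)) =
        (Matrix.of fun a a' => ∑ b : β, ρ (a, b) (a', b)) +
          (Matrix.of fun a a' => ∑ b : β, σ (a, b) (a', b)) := by
      ext a a'; simp [Finset.sum_add_distrib]
    show d (Matrix.of fun a a' => ∑ b : β, (ρ + σ) (a, b) (a', b)) = _
    rw [h, map_add]
  map_smul' c ρ := by
    have h : (Matrix.of fun a a' => ∑ b : β, (c • ρ) (a, b) (a', b)) =
        c • (Matrix.of fun a a' => ∑ b : β, ρ (a, b) (a', b)) := by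
      ext a a'; simp [Finset.mul_sum]
    show d (Matrix.of fun a a' => ∑ b : β, (c • ρ) (a, b) (a', b)) = _
    rw [h, map_smul]
    rfl

/-- Tensor product of two linear functionals on matrix algebras. -/
def funTens {α β : Type} (d : Matrix α α ℂ →ₗ[ℂ] ℂ) (d' : Matrix β β ℂ →ₗ[ℂ] ℂ) :
    Matrix (α × β) (α × β) ℂ →ₗ[ℂ] ℂ where
  toFun ρ := d' (Matrix.of fun b b' => d (Matrix.of fun a a' => ρ (a, b) (a', b')))
  map_add' ρ σ := by
    have h : (Matrix.of fun b b' => d (Matrix.of fun a a' => (ρ + σ) (a, b) (a', b'))) =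
        (Matrix.of fun b b' => d (Matrix.of fun a a' => ρ (a, b) (a', b'))) +
          (Matrix.of fun b b' => d (Matrix.of fun a a' => σ (a, b) (a', b'))) := by
      ext b b'
      show d (Matrix.of fun a a' => (ρ + σ) (a, b) (a', b')) = _
      rw [show (Matrix.of fun a a' => (ρ + σ) (a, b) (a', b')) =
          (Matrix.of fun a a' => ρ (a, b) (a', b')) +
            (Matrix.of fun a a' => σ (a, b) (a', b')) from rfl, map_add]
      rfl
    show d' (Matrix.of fun b b' => d (Matrix.of fun a a' => (ρ + σ) (a, b) (a', b'))) = _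
    rw [h, map_add]
  map_smul' c ρ := by
    have h : (Matrix.of fun b b' => d (Matrix.of fun a a' => (c • ρ) (a, b) (a', b'))) =
        c • (Matrix.of fun b b' => d (Matrix.of fun a a' => ρ (a, b) (a', b'))) := by
      ext b b'
      show d (Matrix.of fun a a' => (c • ρ) (a, b) (a', b')) = _
      rw [show (Matrix.of fun a a' => (c • ρ) (a, b) (a', b')) =
          c • (Matrix.of fun a a' => ρ (a, b) (a', b')) from rfl, map_smul]
      rfl
    show d' (Matrix.of fun b b' => d (Matrix.of fun a a' => (c • ρ) (a, b) (a', b'))) = _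
    rw [h, map_smul]
    rfl

/-- A super-operator is CPTNI if it is hermitian-preserving, completely positive and trace
non-increasing. -/
structure IsCPTNI {α β : Type} [Fintype α] [Fintype β] (Φ : MatMap α β) : Prop where
  herm : ∀ ρ : Matrix α α ℂ, ρ.IsHermitian → (Φ ρ).IsHermitian
  cp : ∀ (n : ℕ) (ρ : Matrix (α × Fin n) (α × Fin n) ℂ), ρ.PosSemidef →
    (tensorIdRight Φ ρ).PosSemidef
  tni : ∀ ρ : Matrix α α ℂ, ρ.PosSemidef → ((Φ ρ).trace).re ≤ (ρ.trace).re

/-- A linear functional on a matrix algebra is nonnegative (`d ⊒ 0`) if it sends every positive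
semidefinite matrix to a nonnegative real. -/
def FunNonneg {α : Type} [Fintype α] (d : Matrix α α ℂ →ₗ[ℂ] ℂ) : Prop :=
  ∀ ρ : Matrix α α ℂ, ρ.PosSemidef → ∃ r : ℝ, 0 ≤ r ∧ d ρ = (r : ℂ)


/-- Dependent tensor-index over a finite set: one index coordinate per element. -/
abbrev PiF {α : Type} (f : α → Type) (s : Finset α) : Type := (a : s) → f ↑a

/-- Splitting a tensor index over a disjoint union. -/
def piFUnion {α : Type} [DecidableEq α] (f : α → Type) (s t : Finset α) (hst : Disjoint s t) :
    PiF f (s ∪ t) ≃ PiF f s × PiF f t where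
  toFun g := (fun a => g ⟨a.1, Finset.mem_union_left _ a.2⟩,
              fun a => g ⟨a.1, Finset.mem_union_right _ a.2⟩)
  invFun p a :=
    if h : a.1 ∈ s then p.1 ⟨a.1, h⟩
    else p.2 ⟨a.1, (Finset.mem_union.mp a.2).resolve_left h⟩
  left_inv g := by
    funext a
    by_cases h : a.1 ∈ s
    · simp [h]
    · simp [h]
  right_inv p := by
    refine Prod.ext ?_ ?_
    · funext a
      simp [a.2]
    · funext a
      have h : a.1 ∉ s := Finset.disjoint_right.mp hst a.2
      simp [h]

/-- The tensor index over a singleton. -/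
def piFSingleton {α : Type} [DecidableEq α] (f : α → Type) (a : α) :
    PiF f ({a} : Finset α) ≃ f a where
  toFun g := g ⟨a, Finset.mem_singleton_self a⟩
  invFun v b := cast (congrArg f (Finset.mem_singleton.mp b.2).symm) v
  left_inv g := by
    funext b
    obtain ⟨b, hb⟩ := b
    obtain rfl := Finset.mem_singleton.mp hb
    rfl
  right_inv v := rfl

/-- The tensor index over the empty set. -/
def piFEmpty {α : Type} (f : α → Type) : PiF f (∅ : Finset α) ≃ PUnit.{1} where
  toFun _ := PUnit.unit
  invFun _ b := absurd b.2 (Finset.notMem_empty _)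
  left_inv g := by
    funext b
    exact absurd b.2 (Finset.notMem_empty _)
  right_inv u := rfl

variable {P E : Type} [DecidableEq P] [DecidableEq E]

/-- The index of the space `Q₀(s) ⊗ H(t)` for a finite set `s` of places and `t` of
transitions. -/
abbrev SIdx (Q : P → Type) (H : E → Type) (s : Finset P) (t : Finset E) : Type :=
  PiF Q s × PiF H t

/-- Splitting `Q₀(s₁ ∪ s₂) ⊗ H(t₁ ∪ t₂)` into `(Q₀(s₁) ⊗ H(t₁)) ⊗ (Q₀(s₂) ⊗ H(t₂))`. -/
def sidxSplit (Q : P → Type) (H : E → Type) (s₁ s₂ : Finset P) (t₁ t₂ : Finset E)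
    (hs : Disjoint s₁ s₂) (ht : Disjoint t₁ t₂) :
    SIdx Q H (s₁ ∪ s₂) (t₁ ∪ t₂) ≃ SIdx Q H s₁ t₁ × SIdx Q H s₂ t₂ :=
  (Equiv.prodCongr (piFUnion Q s₁ s₂ hs) (piFUnion H t₁ t₂ ht)).trans
    (Equiv.prodProdProdComm _ _ _ _)

/-- Merging an extra `H`-factor into the second component. -/
def sidxAbsorb (Q : P → Type) (H : E → Type) (s : Finset P) (t u : Finset E)
    (h : Disjoint t u) :
    SIdx Q H s t × PiF H u ≃ SIdx Q H s (t ∪ u) :=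
  (Equiv.prodAssoc _ _ _).trans (Equiv.prodCongr (Equiv.refl _) (piFUnion H t u h).symm)

/-- Dropping the (trivial) `H`-factor over the empty set. -/
def sidxOfQ (Q : P → Type) (H : E → Type) (s : Finset P) :
    PiF Q s ≃ SIdx Q H s (∅ : Finset E) :=
  (Equiv.prodPUnit.{0,0} _).symm.trans (Equiv.prodCongr (Equiv.refl _) (piFEmpty H).symm)


variable {P E : Type} [DecidableEq P] [DecidableEq E]

theorem Net.negs_insert (N : Net P E) (e : E) (s : Finset E) :
    N.negs (insert e s) = N.negPart e ∪ N.negs s := by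
  unfold Net.negs Net.negPart
  rw [Finset.filter_insert]
  by_cases h : N.pol e = Pol.neg
  · rw [if_pos h, if_pos h, Finset.insert_eq]
  · rw [if_neg h, if_neg h, Finset.empty_union]

theorem Net.poss_insert (N : Net P E) (e : E) (s : Finset E) :
    N.poss (insert e s) = N.posPart e ∪ N.poss s := by
  unfold Net.poss Net.posPart
  rw [Finset.filter_insert]
  by_cases h : N.pol e = Pol.pos
  · rw [if_pos h, if_pos h, Finset.insert_eq]
  · rw [if_neg h, if_neg h, Finset.empty_union]

/-- A local quantum annotation of a polarized net: a finite-dimensional Hilbert space `Q a`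
(given by its index type) for every place `a`, a finite-dimensional Hilbert space `H t` for
every transition `t`, and for every transition `t` a CPTNI map
`Q₀(t) : Ops(Q₀(pre t) ⊗ H({t}^⊖)) → Ops(Q₀(post t) ⊗ H({t}^⊕))`. -/
structure Ann (N : Net P E) (Q : P → Type) (H : E → Type)
    [∀ a, Fintype (Q a)] [∀ e, Fintype (H e)] where
  Q0 : (e : E) → MatMap (SIdx Q H (N.pre e) (N.negPart e)) (SIdx Q H (N.post e) (N.posPart e))

variable (Q : P → Type) (H : E → Type) [∀ a, Fintype (Q a)] [∀ e, Fintype (H e)]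
variable {N : Net P E}

/-- All the maps of a local annotation are CPTNI (part of being a local quantum annotation). -/
def AnnCPTNI (A : Ann N Q H) : Prop := ∀ e, IsCPTNI (A.Q0 e)

/-- The action of a single transition `e` fired at marking `m`, tensored with the identity on
the untouched conditions and on the pending `H`-spaces indexed by `t`. -/
def stepMap (A : Ann N Q H) (e : E) (m : Finset P) (t : Finset E) :
    MatMap (SIdx Q H m (N.negPart e ∪ t)) (SIdx Q H (N.fire m e) (N.posPart e ∪ t)) :=
  if h : N.pre e ⊆ m ∧ Disjoint (N.post e) (m \ N.pre e) ∧
      Disjoint (N.negPart e) t ∧ Disjoint (N.posPart e) t then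
    conjMap
      (((sidxSplit Q H (N.pre e) (m \ N.pre e) (N.negPart e) t
          Finset.disjoint_sdiff h.2.2.1).symm).trans
        (Equiv.cast (by rw [Finset.union_sdiff_of_subset h.1])))
      (((sidxSplit Q H (N.post e) (m \ N.pre e) (N.posPart e) t h.2.1 h.2.2.2).symm).trans
        (Equiv.cast (by rw [show N.post e ∪ (m \ N.pre e) = N.fire m e from
          Finset.union_comm _ _])))
      (tensorIdRight (A.Q0 e))
  else 0

/-- The super-operator `𝕆` associated to the firing of the list `L` of transitions from the
marking `m`, carrying the already-produced/not-yet-consumed `H`-spaces indexed by `c` along by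
the identity: the layer-by-layer composite of the maps `Q₀(e)`, `e ∈ L`, padded with
identities. -/
def opSeq (A : Ann N Q H) : (m : Finset P) → (L : List E) → (c : Finset E) →
    MatMap (SIdx Q H m (N.negs L.toFinset ∪ c))
      (SIdx Q H (N.markAfter m L) (N.poss L.toFinset ∪ c))
  | m, [], c => castMap (by simp [Net.negs, Net.poss, Net.markAfter])
  | m, e :: L, c =>
    castMap (by
      rw [show N.poss L.toFinset ∪ (N.posPart e ∪ c) = N.poss (e :: L).toFinset ∪ c by
        rw [List.toFinset_cons, Net.poss_insert, Finset.union_left_comm, Finset.union_assoc]]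
      simp only [Net.markAfter]) ∘ₗ
    opSeq A (N.fire m e) L (N.posPart e ∪ c) ∘ₗ
    castMap (by rw [Finset.union_left_comm]) ∘ₗ
    stepMap Q H A e m (N.negs L.toFinset ∪ c) ∘ₗ
    castMap (by rw [List.toFinset_cons, Net.negs_insert, Finset.union_assoc])

/-- The induced global annotation `Q([m;m']) := 𝕆(O|[m;m'])`, defined on every interval of
markings `m →* m'`; it maps operators on `Q₀(m) ⊗ H(σ[m;m']^⊖)` to operators on
`Q₀(m') ⊗ H(σ[m;m']^⊕)`. -/
def glob (A : Ann N Q H) (m m' : Finset P) :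
    MatMap (SIdx Q H m (N.negs (N.sigma m m'))) (SIdx Q H m' (N.poss (N.sigma m m'))) :=
  if h : ∃ L, N.FireSeq m L m' then
    castMap (by
      rw [N.markAfter_eq h.choose_spec,
        show N.poss h.choose.toFinset ∪ ∅ = N.poss (N.sigma m m') by
          rw [Finset.union_empty]
          simp only [Net.sigma]
          rw [dif_pos h]]) ∘ₗ
    opSeq Q H A m h.choose ∅ ∘ₗ
    castMap (by
      rw [show N.negs (N.sigma m m') = N.negs h.choose.toFinset ∪ ∅ by
        rw [Finset.union_empty]
        simp only [Net.sigma]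
        rw [dif_pos h]])
  else 0

/-- Tensoring a super-operator between `SIdx`-spaces with the identity on the `H`-spaces of a
further finite set `u` of transitions. -/
def extendH {s s' : Finset P} {t t' : Finset E} (u : Finset E)
    (Φ : MatMap (SIdx Q H s t) (SIdx Q H s' t')) (h : Disjoint t u) (h' : Disjoint t' u) :
    MatMap (SIdx Q H s (t ∪ u)) (SIdx Q H s' (t' ∪ u)) :=
  conjMap (sidxAbsorb Q H s t u h) (sidxAbsorb Q H s' t' u h') (tensorIdRight Φ)

/-- The canonical identification of operators on `Q₀(s)` with operators on `Q₀(s) ⊗ H(∅)`. -/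
def padQ (s : Finset P) : MatMap (PiF Q s) (SIdx Q H s (∅ : Finset E)) :=
  conjMap (Equiv.refl _) (sidxOfQ Q H s) LinearMap.id

/-- The functional `tr ∘ 𝕆(O|[m; m'])` on operators on `Q₀(m)`, for a positive/neutral
interval of markings `m →* m'` (and the zero functional otherwise). -/
def dropTerm (A : Ann N Q H) (m m' : Finset P) :
    Matrix (PiF Q m) (PiF Q m) ℂ →ₗ[ℂ] ℂ :=
  if h : N.negs (N.sigma m m') = ∅ then
    trFun (SIdx Q H m' (N.poss (N.sigma m m'))) ∘ₗ glob Q H A m m' ∘ₗ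
      castMap (by rw [h]) ∘ₗ padQ Q H m
  else 0

/-- The drop function `d[x; y₁,…,yₙ]`, a linear functional on operators on `Q₀(x̂)`:
`Σ_{I ⊆ {1,…,n}, y_I ∈ C(E)} (−1)^{|I|} tr ∘ 𝕆(O|[x̂; ŷ_I])`, where `y_I = x ∪ ⋃_{i∈I} yᵢ`. -/
def dropFun (A : Ann N Q H) (x : Finset E) {n : ℕ} (y : Fin n → Finset E) :
    Matrix (PiF Q (N.markingOf x)) (PiF Q (N.markingOf x)) ℂ →ₗ[ℂ] ℂ :=
  ∑ I : Finset (Fin n),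
    if N.IsConfig (x ∪ I.biUnion y) then
      ((-1 : ℂ) ^ I.card) • dropTerm Q H A (N.markingOf x) (N.markingOf (x ∪ I.biUnion y))
    else 0

/-- Local Obliviousness: for every negative event `e`, `Q₀(e)` is the identity map on
operators on `Q₀(pre e) ⊗ H(e)`. -/
def LocalObliviousness (A : Ann N Q H) : Prop :=
  ∀ e : E, N.pol e = Pol.neg →
    HEq (A.Q0 e)
      (LinearMap.id :
        MatMap (SIdx Q H (N.pre e) (N.negPart e)) (SIdx Q H (N.pre e) (N.negPart e)))

/-- Two events lie in the same conflict cluster (connected component of the conflict graph). -/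
def Net.inSameCluster (N : Net P E) (a b : E) : Prop :=
  Relation.ReflTransGen (fun u v => N.conflict u v ∨ N.conflict v u) a b

/-- The Local Drop Condition: `d[x; x∪{e₁},…,x∪{e_k}] ⊒ 0` for every configuration `x` and all
mutually compatible events `e₁,…,e_k` of polarity `0` or `⊕` lying in a single conflict
cluster, each enabled at `x`. -/
def LocalDropCondition (A : Ann N Q H) : Prop :=
  ∀ (x : Finset E) (k : ℕ) (e : Fin k → E),
    N.IsConfig x →
    (∀ i, N.pol (e i) ≠ Pol.neg) →
    (∀ i, N.Enables x (e i)) →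
    (∀ i j, N.inSameCluster (e i) (e j)) →
    (∀ i j, i ≠ j → ¬ N.conflict (e i) (e j)) →
    FunNonneg (dropFun Q H A x fun i => insert (e i) x)

section Transport

variable {P E C F : Type} [DecidableEq P] [DecidableEq E] [DecidableEq C] [DecidableEq F]

/-- The bijection of finset-subtypes induced by a `Set.BijOn`. -/
def bijOnEquiv {g : C → P} {s : Finset C} {t : Finset P} (h : Set.BijOn g ↑s ↑t) : s ≃ t :=
  Equiv.ofBijective (fun a => ⟨g a.1, by exact_mod_cast h.mapsTo (by exact_mod_cast a.2)⟩)
    (by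
      constructor
      · intro a b hab
        exact Subtype.ext (h.injOn (by exact_mod_cast a.2) (by exact_mod_cast b.2)
          (congrArg Subtype.val hab))
      · intro b
        obtain ⟨a, ha, hab⟩ := h.surjOn (by exact_mod_cast b.2)
        exact ⟨⟨a, by exact_mod_cast ha⟩, Subtype.ext hab⟩)

/-- Transport of the tensor index of a space assignment along a bijective relabeling. -/
def piFTransport {g : C → P} (Q : P → Type) {s : Finset C} {t : Finset P}
    (h : Set.BijOn g ↑s ↑t) :
    PiF (fun c => Q (g c)) s ≃ PiF Q t :=
  Equiv.piCongr (bijOnEquiv h) (fun _ => Equiv.cast rfl)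

/-- Matching the `H`-spaces of the polarity part (`{e}^⊖` or `{e}^⊕`) of corresponding
events. -/
def piFPolPart {E₁ E₂ : Type} [DecidableEq E₁] [DecidableEq E₂]
    (H₁ : E₁ → Type) (H₂ : E₂ → Type) (e₁ : E₁) (e₂ : E₂)
    (t₁ : Finset E₁) (t₂ : Finset E₂) (q r : Pol)
    (h₁ : t₁ = if q = r then {e₁} else ∅)
    (h₂ : t₂ = if q = r then {e₂} else ∅)
    (hH : H₁ e₁ = H₂ e₂) :
    PiF H₁ t₁ ≃ PiF H₂ t₂ :=
  if h : q = r then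
    (Equiv.cast (by rw [h₁, if_pos h])).trans
      ((piFSingleton H₁ e₁).trans ((Equiv.cast hH).trans
        ((piFSingleton H₂ e₂).symm.trans (Equiv.cast (by rw [h₂, if_pos h])))))
  else
    (Equiv.cast (by rw [h₁, if_neg h])).trans
      ((piFEmpty H₁).trans ((piFEmpty H₂).symm.trans (Equiv.cast (by rw [h₂, if_neg h]))))

/-- The local annotation induced on a labeled net `O` by transporting an annotation of `N`
along the labeling `(pC, pE)` (each condition and event receiving the annotation of its
label). -/
def transportAnn {N : Net P E} {O : Net C F} (pC : C → P) (pE : F → E)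
    (hpre : ∀ e, Set.BijOn pC ↑(O.pre e) ↑(N.pre (pE e)))
    (hpost : ∀ e, Set.BijOn pC ↑(O.post e) ↑(N.post (pE e)))
    (hpol : ∀ e, O.pol e = N.pol (pE e))
    (Q : P → Type) (H : E → Type) [∀ a, Fintype (Q a)] [∀ e, Fintype (H e)]
    (A : Ann N Q H) : Ann O (fun c => Q (pC c)) (fun e => H (pE e)) where
  Q0 e := conjMap
    (Equiv.prodCongr (piFTransport Q (hpre e)).symm
      (piFPolPart H (fun e' => H (pE e')) (pE e) e (N.negPart (pE e)) (O.negPart e)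
        (N.pol (pE e)) Pol.neg rfl (by simp only [Net.negPart, hpol e]) rfl))
    (Equiv.prodCongr (piFTransport Q (hpost e)).symm
      (piFPolPart H (fun e' => H (pE e')) (pE e) e (N.posPart (pE e)) (O.posPart e)
        (N.pol (pE e)) Pol.pos rfl (by simp only [Net.posPart, hpol e]) rfl))
    (A.Q0 (pE e))

/-- A branching process of a net `N`: an occurrence net `O` with a labeling `(pC, pE)`
preserving the nature of nodes, the environments of transitions, the initial marking and
polarities, and not duplicating transitions. -/
structure IsBranchingProcess (N : Net P E) (O : Net C F) (pC : C → P) (pE : F → E) : Prop where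
  occ : O.IsOccurrenceNet
  pre_bij : ∀ e, Set.BijOn pC ↑(O.pre e) ↑(N.pre (pE e))
  post_bij : ∀ e, Set.BijOn pC ↑(O.post e) ↑(N.post (pE e))
  init_bij : Set.BijOn pC ↑O.init ↑N.init
  pol_eq : ∀ e, O.pol e = N.pol (pE e)
  no_dup : ∀ e₁ e₂, O.pre e₁ = O.pre e₂ → pE e₁ = pE e₂ → e₁ = e₂

/-- The unfolding `𝒰(N)`: the (unique) maximal branching process, into which every other
branching process embeds compatibly with the labelings. -/
structure IsUnfolding (N : Net P E) (O : Net C F) (pC : C → P) (pE : F → E) : Prop where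
  bp : IsBranchingProcess N O pC pE
  maximal : ∀ (C' F' : Type) [DecidableEq C'] [DecidableEq F'] (O' : Net C' F')
      (pC' : C' → P) (pE' : F' → E), IsBranchingProcess N O' pC' pE' →
      ∃ (gC : C' → C) (gE : F' → F),
        Function.Injective gC ∧ Function.Injective gE ∧
        (∀ c, pC (gC c) = pC' c) ∧ (∀ e, pE (gE e) = pE' e) ∧
        (∀ e, (O'.pre e).image gC = O.pre (gE e)) ∧
        (∀ e, (O'.post e).image gC = O.post (gE e)) ∧
        O'.init.image gC = O.init

end Transport

/-- A Local Quantum Occurrence Net: an occurrence net whose local (CPTNI) annotation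
satisfies Local Obliviousness and the Local Drop Condition. -/
def IsLQON {C F : Type} [DecidableEq C] [DecidableEq F] (O : Net C F)
    (Q : C → Type) (H : F → Type) [∀ a, Fintype (Q a)] [∀ e, Fintype (H e)]
    (A : Ann O Q H) : Prop :=
  O.IsOccurrenceNet ∧ AnnCPTNI Q H A ∧ LocalObliviousness Q H A ∧ LocalDropCondition Q H A

/-- A Quantum Petri Net: a (safe) Petri net with polarized transitions and a local annotation
whose transport along the labeling makes its unfolding a Local Quantum Occurrence Net. -/
def IsQuantumPetriNet {P E : Type} [DecidableEq P] [DecidableEq E] (N : Net P E)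
    (Q : P → Type) (H : E → Type) [∀ a, Fintype (Q a)] [∀ e, Fintype (H e)]
    (A : Ann N Q H) : Prop :=
  ∀ (C F : Type) [DecidableEq C] [DecidableEq F] (O : Net C F) (pC : C → P) (pE : F → E)
    (h : IsUnfolding N O pC pE),
    IsLQON O (fun c => Q (pC c)) (fun e => H (pE e))
      (transportAnn pC pE h.bp.pre_bij h.bp.post_bij h.bp.pol_eq Q H A)

section Join

variable {P E : Type} [DecidableEq P] [DecidableEq E]
variable (Q : P → Type) (H : E → Type) [∀ a, Fintype (Q a)] [∀ e, Fintype (H e)]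

/-- The local map of a joined event `p ⋈ n`:
`Q₀(p⋈n) = (Id_{Q₀(post p)} ⊗ Q₀(n)) ∘ (Q₀(p) ⊗ Id_{Q₀(pre n)})`
(equivalently `Q₀(p) ⊗ Id_{Q₀(pre n)}`), using `H(p) = H(n)`; zero in degenerate cases. -/
def joinedQ0 {N : Net P E} (A : Ann N Q H) (p nn : E) :
    MatMap (SIdx Q H (N.pre p ∪ N.pre nn) (∅ : Finset E))
      (SIdx Q H (N.post p ∪ N.post nn) (∅ : Finset E)) :=
  if h : N.pol p = Pol.pos ∧ N.pol nn = Pol.neg ∧ H p = H nn ∧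
      Disjoint (N.pre p) (N.pre nn) ∧ Disjoint (N.post p) (N.post nn) then
    conjMap
      ((Equiv.prodCongr (Equiv.refl (PiF Q (N.post p)))
          (Equiv.prodComm (PiF Q (N.pre nn)) (PiF H ({nn} : Finset E)))).trans
        ((Equiv.prodAssoc _ _ _).symm.trans
          (Equiv.prodCongr
            (Equiv.prodCongr (Equiv.refl _)
              ((piFSingleton H nn).trans ((Equiv.cast h.2.2.1.symm).trans
                (piFSingleton H p).symm)))
            (Equiv.refl _))))
      ((Equiv.prodAssoc _ _ _).symm.trans
        (Equiv.prodCongr (piFUnion Q (N.post p) (N.post nn) h.2.2.2.2).symm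
          (Equiv.refl _)))
      (tensorIdLeft
        (castMap (by rw [show N.posPart nn = (∅ : Finset E) from by
            simp [Net.posPart, h.2.1]]) ∘ₗ
          A.Q0 nn ∘ₗ
          castMap (by rw [show N.negPart nn = ({nn} : Finset E) from by
            simp [Net.negPart, h.2.1]]))) ∘ₗ
    conjMap
      ((Equiv.prodAssoc _ _ _).trans
        ((Equiv.prodCongr (Equiv.refl (PiF Q (N.pre p)))
            (Equiv.prodComm (PiF H (∅ : Finset E)) (PiF Q (N.pre nn)))).trans
          ((Equiv.prodAssoc _ _ _).symm.trans
            (Equiv.prodCongr (piFUnion Q (N.pre p) (N.pre nn) h.2.2.2.1).symm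
              (Equiv.refl _)))))
      (Equiv.refl _)
      (tensorIdRight
        (castMap (by rw [show N.posPart p = ({p} : Finset E) from by
            simp [Net.posPart, h.1]]) ∘ₗ
          A.Q0 p ∘ₗ
          castMap (by rw [show N.negPart p = (∅ : Finset E) from by
            simp [Net.negPart, h.1]])))
  else 0

/-- The events of the net obtained by joining away the negative events in `Nn`. -/
abbrev JoinE (Nn : Finset E) : Type := {e : E // e ∉ Nn}

/-- The net obtained from `N` by simultaneously joining each negative event `n ∈ Nn` with the
positive event `f(n) ∈ Pp`: each `p = f(n) ∈ Pp` becomes the neutral joined event `p ⋈ n` with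
`pre(p⋈n) = pre(p) ∪ pre(n)` and `post(p⋈n) = post(p) ∪ post(n)`; everything else is
unchanged.  (For a single join `S_{p⋈n}` take `Nn = {n}`, `Pp = {p}`, `f = fun _ => p`.) -/
def joinNet (N : Net P E) (Nn Pp : Finset E) (f : E → E) : Net P (JoinE Nn) where
  pre e :=
    haveI : Nonempty E := ⟨e.1⟩
    if e.1 ∈ Pp then N.pre e.1 ∪ N.pre (Function.invFunOn f ↑Nn e.1) else N.pre e.1
  post e :=
    haveI : Nonempty E := ⟨e.1⟩
    if e.1 ∈ Pp then N.post e.1 ∪ N.post (Function.invFunOn f ↑Nn e.1) else N.post e.1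
  init := N.init
  pol e := if e.1 ∈ Pp then Pol.zero else N.pol e.1

/-- The local annotation of the joined net: joined events receive
`Q₀(p) ⊗ Id_{Q₀(pre n)}`, all other events keep their annotation. -/
def joinAnn {N : Net P E} (A : Ann N Q H) (Nn Pp : Finset E) (f : E → E) :
    Ann (joinNet N Nn Pp f) Q (fun e => H e.1) where
  Q0 e :=
    haveI : Nonempty E := ⟨e.1⟩
    if h : e.1 ∈ Pp then
      conjMap
        (Equiv.prodCongr
          (Equiv.cast (by
            rw [show (joinNet N Nn Pp f).pre e =
              N.pre e.1 ∪ N.pre (Function.invFunOn f ↑Nn e.1) from by simp [joinNet, h]]))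
          ((piFEmpty H).trans ((piFEmpty (fun e' : JoinE Nn => H e'.1)).symm.trans
            (Equiv.cast (by
              rw [show (joinNet N Nn Pp f).negPart e = ∅ from by
                simp [Net.negPart, joinNet, h]])))))
        (Equiv.prodCongr
          (Equiv.cast (by
            rw [show (joinNet N Nn Pp f).post e =
              N.post e.1 ∪ N.post (Function.invFunOn f ↑Nn e.1) from by simp [joinNet, h]]))
          ((piFEmpty H).trans ((piFEmpty (fun e' : JoinE Nn => H e'.1)).symm.trans
            (Equiv.cast (by
              rw [show (joinNet N Nn Pp f).posPart e = ∅ from by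
                simp [Net.posPart, joinNet, h]])))))
        (joinedQ0 Q H A e.1 (Function.invFunOn f ↑Nn e.1))
    else
      conjMap
        (Equiv.prodCongr
          (Equiv.cast (by
            rw [show (joinNet N Nn Pp f).pre e = N.pre e.1 from by simp [joinNet, h]]))
          (piFPolPart H (fun e' : JoinE Nn => H e'.1) e.1 e (N.negPart e.1)
            ((joinNet N Nn Pp f).negPart e) (N.pol e.1) Pol.neg rfl
            (by simp [Net.negPart, joinNet, h]) rfl))
        (Equiv.prodCongr
          (Equiv.cast (by
            rw [show (joinNet N Nn Pp f).post e = N.post e.1 from by simp [joinNet, h]]))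
          (piFPolPart H (fun e' : JoinE Nn => H e'.1) e.1 e (N.posPart e.1)
            ((joinNet N Nn Pp f).posPart e) (N.pol e.1) Pol.pos rfl
            (by simp [Net.posPart, joinNet, h]) rfl))
        (A.Q0 e.1)

/-- A conflict cluster: a (nonempty) connected component of the conflict graph. -/
def IsConflictCluster (N : Net P E) (Cl : Finset E) : Prop :=
  Cl.Nonempty ∧ (∀ a ∈ Cl, ∀ b ∈ Cl, N.inSameCluster a b) ∧
    (∀ a ∈ Cl, ∀ b, N.inSameCluster a b → b ∈ Cl)

/-- A drop-preserving join: a maximal negative conflict cluster `Nn`, a strictly positive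
cluster `Pp`, and a bijection `f : Nn → Pp` preserving minimal conflicts, with
`H(f(e)) = H(e)` for every `e ∈ Nn`. -/
structure IsDropPreservingJoin (N : Net P E) (H : E → Type) (Nn Pp : Finset E)
    (f : E → E) : Prop where
  neg_cluster : IsConflictCluster N Nn
  neg_pol : ∀ a ∈ Nn, N.pol a = Pol.neg
  pos_pol : ∀ a ∈ Pp, N.pol a = Pol.pos
  pos_connected : ∀ a ∈ Pp, ∀ b ∈ Pp, N.inSameCluster a b
  bij : Set.BijOn f ↑Nn ↑Pp
  conf_preserved : ∀ a ∈ Nn, ∀ b ∈ Nn, N.minConflict a b → N.minConflict (f a) (f b)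
  hspaces : ∀ a ∈ Nn, H (f a) = H a

end Join

section Statement14Aux

variable {P E : Type} [DecidableEq P] [DecidableEq E]

theorem Net.conflict_symm {N : Net P E} {a b : E} (h : N.conflict a b) : N.conflict b a := by
  obtain ⟨e, e', hne, hcap, h1, h2⟩ := h
  exact ⟨e', e, hne.symm, by rwa [Finset.inter_comm], h2, h1⟩

theorem Net.minConflict_symm {N : Net P E} {a b : E} (h : N.minConflict a b) :
    N.minConflict b a :=
  ⟨Net.conflict_symm h.1,
   fun b' hb hne hc => h.2.2 b' hb hne (Net.conflict_symm hc),
   fun a' ha hne hc => h.2.1 a' ha hne (Net.conflict_symm hc)⟩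

theorem Net.minConflict_direct {N : Net P E} {a b : E} (h : N.minConflict a b) :
    a ≠ b ∧ (N.pre a ∩ N.pre b).Nonempty := by
  obtain ⟨⟨e, e', hne, hcap, h1, h2⟩, hm1, hm2⟩ := h
  have hea : e = a := by
    by_contra hx
    exact hm1 e h1 hx ⟨e, e', hne, hcap, Relation.ReflTransGen.refl, h2⟩
  have heb : e' = b := by
    by_contra hx
    exact hm2 e' h2 hx ⟨e, e', hne, hcap, h1, Relation.ReflTransGen.refl⟩
  subst hea heb
  exact ⟨hne, hcap⟩

theorem Net.exists_minConflict_below {N : Net P E} (hocc : N.IsOccurrenceNet) {a b : E}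
    (h : N.conflict a b) :
    ∃ a' b', N.causes a' a ∧ N.causes b' b ∧ N.minConflict a' b' := by
  classical
  have hmono : ∀ {x y : E}, N.causes x y → x ≠ y →
      (hocc.finite_cones x).toFinset.card < (hocc.finite_cones y).toFinset.card := by
    intro x y hxy hne
    apply Finset.card_lt_card
    rw [Finset.ssubset_iff_of_subset]
    · refine ⟨y, ?_, ?_⟩
      · rw [Set.Finite.mem_toFinset]
        exact Relation.ReflTransGen.refl
      · rw [Set.Finite.mem_toFinset]
        intro hyx
        exact hne (hocc.causality_antisymm x y hxy hyx)
    · intro z hz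
      rw [Set.Finite.mem_toFinset] at hz ⊢
      exact Relation.ReflTransGen.trans hz hxy
  have main : ∀ n (a b : E),
      (hocc.finite_cones a).toFinset.card + (hocc.finite_cones b).toFinset.card = n →
      N.conflict a b →
      ∃ a' b', N.causes a' a ∧ N.causes b' b ∧ N.minConflict a' b' := by
    intro n
    induction n using Nat.strong_induction_on with
    | _ n ih =>
      intro a b hn hab
      by_cases h1 : ∃ a'', N.causes a'' a ∧ a'' ≠ a ∧ N.conflict a'' b
      · obtain ⟨a'', hca, hnea, hc⟩ := h1
        obtain ⟨a', b', p1, p2, p3⟩ :=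
          ih _ (by have := hmono hca hnea; omega) a'' b rfl hc
        exact ⟨a', b', Relation.ReflTransGen.trans p1 hca, p2, p3⟩
      · by_cases h2 : ∃ b'', N.causes b'' b ∧ b'' ≠ b ∧ N.conflict a b''
        · obtain ⟨b'', hcb, hneb, hc⟩ := h2
          obtain ⟨a', b', p1, p2, p3⟩ :=
            ih _ (by have := hmono hcb hneb; omega) a b'' rfl hc
          exact ⟨a', b', p1, Relation.ReflTransGen.trans p2 hcb, p3⟩
        · push_neg at h1 h2
          exact ⟨a, b, Relation.ReflTransGen.refl, Relation.ReflTransGen.refl, hab,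
            fun a' hca hne => h1 a' hca hne, fun b' hcb hne => h2 b' hcb hne⟩
  exact main _ a b rfl h

variable [Nonempty E] (N : Net P E) (Nn Pp : Finset E) (f : E → E)

theorem joinNet_pre' (e : JoinE Nn) :
    (joinNet N Nn Pp f).pre e =
      if e.1 ∈ Pp then N.pre e.1 ∪ N.pre (Function.invFunOn f ↑Nn e.1) else N.pre e.1 := rfl

theorem joinNet_post' (e : JoinE Nn) :
    (joinNet N Nn Pp f).post e =
      if e.1 ∈ Pp then N.post e.1 ∪ N.post (Function.invFunOn f ↑Nn e.1) else N.post e.1 := rfl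

theorem joinNet_pol' (e : JoinE Nn) :
    (joinNet N Nn Pp f).pol e = if e.1 ∈ Pp then Pol.zero else N.pol e.1 := rfl

/-- The canonical lift of an original event to the joined net: a joined-away negative event
is replaced by its positive partner. -/
def liftJE (hmap : ∀ x ∈ Nn, f x ∈ Pp) (hdisj : ∀ x ∈ Pp, x ∉ Nn) (u : E) : JoinE Nn :=
  if h : u ∈ Nn then ⟨f u, hdisj _ (hmap u h)⟩ else ⟨u, h⟩

theorem pre_subset_liftJE (hmap : ∀ x ∈ Nn, f x ∈ Pp) (hdisj : ∀ x ∈ Pp, x ∉ Nn)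
    (hinj : Set.InjOn f ↑Nn) (u : E) :
    N.pre u ⊆ (joinNet N Nn Pp f).pre (liftJE Nn Pp f hmap hdisj u) := by
  by_cases h : u ∈ Nn
  · rw [liftJE, dif_pos h, joinNet_pre']
    have hinv : Function.invFunOn f ↑Nn (f u) = u :=
      hinj.leftInvOn_invFunOn (Finset.mem_coe.mpr h)
    rw [if_pos (hmap u h), hinv]
    exact Finset.subset_union_right
  · rw [liftJE, dif_neg h, joinNet_pre']
    by_cases h' : u ∈ Pp
    · rw [if_pos h']
      exact Finset.subset_union_left
    · rw [if_neg h']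

theorem post_subset_liftJE (hmap : ∀ x ∈ Nn, f x ∈ Pp) (hdisj : ∀ x ∈ Pp, x ∉ Nn)
    (hinj : Set.InjOn f ↑Nn) (u : E) :
    N.post u ⊆ (joinNet N Nn Pp f).post (liftJE Nn Pp f hmap hdisj u) := by
  by_cases h : u ∈ Nn
  · rw [liftJE, dif_pos h, joinNet_post']
    have hinv : Function.invFunOn f ↑Nn (f u) = u :=
      hinj.leftInvOn_invFunOn (Finset.mem_coe.mpr h)
    rw [if_pos (hmap u h), hinv]
    exact Finset.subset_union_right
  · rw [liftJE, dif_neg h, joinNet_post']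
    by_cases h' : u ∈ Pp
    · rw [if_pos h']
      exact Finset.subset_union_left
    · rw [if_neg h']

theorem causes_liftJE (hmap : ∀ x ∈ Nn, f x ∈ Pp) (hdisj : ∀ x ∈ Pp, x ∉ Nn)
    (hinj : Set.InjOn f ↑Nn) {u : E} {v : JoinE Nn} (h : N.causes u v.1) :
    (joinNet N Nn Pp f).causes (liftJE Nn Pp f hmap hdisj u) v := by
  induction h using Relation.ReflTransGen.head_induction_on with
  | refl =>
    have hv : liftJE Nn Pp f hmap hdisj v.1 = v := by
      rw [liftJE, dif_neg v.2]
    rw [hv]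
    exact Relation.ReflTransGen.refl
  | head hstep _ ih =>
    refine Relation.ReflTransGen.head ?_ ih
    obtain ⟨p, hp⟩ := hstep
    rw [Finset.mem_inter] at hp
    exact ⟨p, Finset.mem_inter.2
      ⟨post_subset_liftJE N Nn Pp f hmap hdisj hinj _ hp.1,
       pre_subset_liftJE N Nn Pp f hmap hdisj hinj _ hp.2⟩⟩

end Statement14Aux

/-- Let `S` be a race-free occurrence net with polarized events and let
`S' = S ⋈_f` be obtained from `S` by a drop-preserving join determined by a maximal negative
conflict cluster `N`, a strictly positive cluster `P` and a bijection `f : N → P`.  Then `S'`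
is race-free. -/
theorem drop_preserving_join_preserves_race_freeness
    {P E : Type} [DecidableEq P] [DecidableEq E]
    (N : Net P E) (hocc : N.IsOccurrenceNet)
    (H : E → Type)
    (Nn Pp : Finset E) (f : E → E)
    (hdpj : IsDropPreservingJoin N H Nn Pp f)
    (hrf : N.RaceFree) :
    (joinNet N Nn Pp f).RaceFree := by
  have key : ∀ a b, (joinNet N Nn Pp f).minConflict a b →
      (joinNet N Nn Pp f).pol a = Pol.neg → (joinNet N Nn Pp f).pol b = Pol.neg := by
    intro a b hmin hpa
    haveI : Nonempty E := ⟨a.1⟩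
    have hmap : ∀ x ∈ Nn, f x ∈ Pp := fun x hx =>
      Finset.mem_coe.mp (hdpj.bij.mapsTo (Finset.mem_coe.mpr hx))
    have hdisj : ∀ x ∈ Pp, x ∉ Nn := by
      intro x hp hn
      have h1 := hdpj.neg_pol x hn
      have h2 := hdpj.pos_pol x hp
      rw [h1] at h2
      exact Pol.noConfusion h2
    have hinj : Set.InjOn f ↑Nn := hdpj.bij.injOn
    by_cases hab : a = b
    · subst hab; exact hpa
    rw [joinNet_pol'] at hpa
    have haPp : a.1 ∉ Pp := by
      intro h
      rw [if_pos h] at hpa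
      exact Pol.noConfusion hpa
    rw [if_neg haPp] at hpa
    obtain ⟨⟨e, e', hne, hcap, hcea, hceb⟩, hm1, hm2⟩ := hmin
    have hea : a = e := by
      by_contra hx
      exact hm1 e hcea (fun h => hx h.symm)
        ⟨e, e', hne, hcap, Relation.ReflTransGen.refl, hceb⟩
    subst hea
    have heb : b = e' := by
      by_contra hx
      exact hm2 e' hceb (fun h => hx h.symm)
        ⟨a, e', hne, hcap, hcea, Relation.ReflTransGen.refl⟩
    subst heb
    obtain ⟨c, hc⟩ := hcap
    rw [Finset.mem_inter, joinNet_pre' N Nn Pp f a, joinNet_pre' N Nn Pp f b,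
      if_neg haPp] at hc
    obtain ⟨hc1, hc2⟩ := hc
    have hc2' : c ∈ N.pre b.1 := by
      by_cases hbPp : b.1 ∈ Pp
      · rw [if_pos hbPp] at hc2
        rcases Finset.mem_union.1 hc2 with h | h
        · exact h
        · exfalso
          have hnNn : Function.invFunOn f ↑Nn b.1 ∈ Nn := by
            obtain ⟨x, hx, hfx⟩ := hdpj.bij.surjOn (Finset.mem_coe.mpr hbPp)
            exact Finset.mem_coe.mp (Function.invFunOn_mem ⟨x, hx, hfx⟩)
          have hneq : a.1 ≠ Function.invFunOn f ↑Nn b.1 := fun hx => a.2 (hx ▸ hnNn)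
          have hconf : N.conflict a.1 (Function.invFunOn f ↑Nn b.1) :=
            ⟨a.1, _, hneq, ⟨c, Finset.mem_inter.2 ⟨hc1, h⟩⟩,
             Relation.ReflTransGen.refl, Relation.ReflTransGen.refl⟩
          have hcl : N.inSameCluster (Function.invFunOn f ↑Nn b.1) a.1 :=
            Relation.ReflTransGen.single (Or.inr hconf)
          exact a.2 (hdpj.neg_cluster.2.2 _ hnNn a.1 hcl)
      · rwa [if_neg hbPp] at hc2
    have hab1 : a.1 ≠ b.1 := fun h => hab (Subtype.ext h)
    have hconf : N.conflict a.1 b.1 :=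
      ⟨a.1, b.1, hab1, ⟨c, Finset.mem_inter.2 ⟨hc1, hc2'⟩⟩,
        Relation.ReflTransGen.refl, Relation.ReflTransGen.refl⟩
    obtain ⟨a', b', hcaa, hcbb, hminS⟩ := Net.exists_minConflict_below hocc hconf
    obtain ⟨hne', c', hc'⟩ := Net.minConflict_direct hminS
    rw [Finset.mem_inter] at hc'
    have hla : (joinNet N Nn Pp f).causes (liftJE Nn Pp f hmap hdisj a') a :=
      causes_liftJE N Nn Pp f hmap hdisj hinj hcaa
    have hlb : (joinNet N Nn Pp f).causes (liftJE Nn Pp f hmap hdisj b') b :=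
      causes_liftJE N Nn Pp f hmap hdisj hinj hcbb
    have hneqJ : liftJE Nn Pp f hmap hdisj a' ≠ liftJE Nn Pp f hmap hdisj b' := by
      by_cases ha' : a' ∈ Nn <;> by_cases hb' : b' ∈ Nn
      · rw [liftJE, dif_pos ha', liftJE, dif_pos hb']
        intro hx
        exact hne' (hinj (Finset.mem_coe.mpr ha') (Finset.mem_coe.mpr hb')
          (congrArg Subtype.val hx))
      · rw [liftJE, dif_pos ha', liftJE, dif_neg hb']
        intro hx
        have hfb : f a' = b' := congrArg Subtype.val hx
        have hpos : N.pol b' = Pol.pos := hdpj.pos_pol b' (hfb ▸ hmap a' ha')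
        have hneg : N.pol b' = Pol.neg := (hrf a' b' hminS).1 (hdpj.neg_pol a' ha')
        rw [hpos] at hneg
        exact Pol.noConfusion hneg
      · rw [liftJE, dif_neg ha', liftJE, dif_pos hb']
        intro hx
        have hfb : a' = f b' := congrArg Subtype.val hx
        have hpos : N.pol a' = Pol.pos := hdpj.pos_pol a' (hfb ▸ hmap b' hb')
        have hneg : N.pol a' = Pol.neg := (hrf a' b' hminS).2 (hdpj.neg_pol b' hb')
        rw [hpos] at hneg
        exact Pol.noConfusion hneg
      · rw [liftJE, dif_neg ha', liftJE, dif_neg hb']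
        intro hx
        exact hne' (congrArg Subtype.val hx)
    have hmemJ : (c' ∈ (joinNet N Nn Pp f).pre (liftJE Nn Pp f hmap hdisj a')) ∧
        (c' ∈ (joinNet N Nn Pp f).pre (liftJE Nn Pp f hmap hdisj b')) :=
      ⟨pre_subset_liftJE N Nn Pp f hmap hdisj hinj a' hc'.1,
       pre_subset_liftJE N Nn Pp f hmap hdisj hinj b' hc'.2⟩
    have hconfJ : (joinNet N Nn Pp f).conflict (liftJE Nn Pp f hmap hdisj a') b :=
      ⟨_, _, hneqJ, ⟨c', Finset.mem_inter.2 hmemJ⟩, Relation.ReflTransGen.refl, hlb⟩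
    have h1 : liftJE Nn Pp f hmap hdisj a' = a := by
      by_contra hx
      exact hm1 _ hla hx hconfJ
    have hconfJ2 : (joinNet N Nn Pp f).conflict a (liftJE Nn Pp f hmap hdisj b') :=
      ⟨_, _, hneqJ, ⟨c', Finset.mem_inter.2 hmemJ⟩, hla, Relation.ReflTransGen.refl⟩
    have h2 : liftJE Nn Pp f hmap hdisj b' = b := by
      by_contra hx
      exact hm2 _ hlb hx hconfJ2
    have ha'Nn : a' ∉ Nn := by
      intro hx
      have hv : (liftJE Nn Pp f hmap hdisj a').1 = f a' := by
        rw [liftJE, dif_pos hx]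
      rw [h1] at hv
      exact haPp (hv ▸ hmap a' hx)
    have ha'eq : a' = a.1 := by
      have hv : (liftJE Nn Pp f hmap hdisj a').1 = a' := by
        rw [liftJE, dif_neg ha'Nn]
      rw [h1] at hv
      exact hv.symm
    have hpb' : N.pol b' = Pol.neg := by
      refine (hrf a' b' hminS).1 ?_
      rw [ha'eq]
      exact hpa
    have hb'Nn : b' ∉ Nn := by
      intro hx
      have hconfab' : N.conflict a.1 b' :=
        ⟨a', b', hne', ⟨c', Finset.mem_inter.2 hc'⟩,
          by rw [← ha'eq]; exact Relation.ReflTransGen.refl, Relation.ReflTransGen.refl⟩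
      have hcl : N.inSameCluster b' a.1 :=
        Relation.ReflTransGen.single (Or.inr hconfab')
      exact a.2 (hdpj.neg_cluster.2.2 b' hx a.1 hcl)
    have hb'eq : b' = b.1 := by
      have hv : (liftJE Nn Pp f hmap hdisj b').1 = b' := by
        rw [liftJE, dif_neg hb'Nn]
      rw [h2] at hv
      exact hv.symm
    have hbPp : b.1 ∉ Pp := by
      intro hx
      have hp := hdpj.pos_pol b.1 hx
      rw [← hb'eq, hpb'] at hp
      exact Pol.noConfusion hp
    rw [joinNet_pol', if_neg hbPp, ← hb'eq]
    exact hpb'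
  intro a b hmin
  exact ⟨fun h => key a b hmin h, fun h => key b a (Net.minConflict_symm hmin) h⟩

end QPN
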